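/- The positive integers are partitioned by the fibbinary numbers together with the sets Φ_k, k ≥ 1: every positive integer belongs to exactly one of fib, Φ_1, Φ_2, Φ_3, ..., where Φ_k = { 2^r · (q + (2k-1) · 2^{L(q)}) : r ≥ 0, q odd fibbinary }. -/

import Mathlib

/-- A natural number is fibbinary if its binary representation has no two consecutive 1 bits. -/
def Fibbinary (m : ℕ) : Prop := ∀ i : ℕ, ¬(m.testBit i ∧ m.testBit (i + 1))

def Phi (k : ℕ) : Set ℕ :=
  {m : ℕ | ∃ r q : ℕ, Odd q ∧ Fibbinary q ∧
    m = 2 ^ r * (q + (2 * k - 1) * 2 ^ Nat.size q)}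

lemma tb_shift (n r i : ℕ) : (2 ^ r * n).testBit (r + i) = n.testBit i := by
  rw [mul_comm, ← Nat.shiftLeft_eq, Nat.testBit_shiftLeft]
  simp

lemma fib_mul_pow {n : ℕ} (r : ℕ) (h : Fibbinary n) : Fibbinary (2 ^ r * n) := by
  rintro j ⟨h1, h2⟩
  rw [mul_comm, ← Nat.shiftLeft_eq, Nat.testBit_shiftLeft] at h1 h2
  simp only [Bool.and_eq_true, decide_eq_true_eq, ge_iff_le] at h1 h2
  have hr : r ≤ j := h1.1
  have h2' : n.testBit (j - r + 1) = true := by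
    have := h2.2
    rwa [show j + 1 - r = j - r + 1 by omega] at this
  exact h (j - r) ⟨h1.2, h2'⟩

lemma fib_of_fib_mul_pow {n r : ℕ} (h : Fibbinary (2 ^ r * n)) : Fibbinary n := by
  rintro i ⟨h1, h2⟩
  refine h (r + i) ⟨by rw [tb_shift]; exact h1, ?_⟩
  rw [show r + i + 1 = r + (i + 1) by omega, tb_shift]
  exact h2

lemma decomp_mod (q x L : ℕ) (hq : q < 2 ^ L) : (q + x * 2 ^ L) % 2 ^ L = q := by
  rw [Nat.add_mul_mod_self_right, Nat.mod_eq_of_lt hq]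

lemma decomp_div (q x L : ℕ) (hq : q < 2 ^ L) : (q + x * 2 ^ L) / 2 ^ L = x := by
  rw [Nat.add_mul_div_right _ _ (Nat.two_pow_pos L),
    Nat.div_eq_of_lt hq, Nat.zero_add]

lemma tb_low {q x L i : ℕ} (hq : q < 2 ^ L) (hi : i < L) :
    (q + x * 2 ^ L).testBit i = q.testBit i := by
  conv_rhs => rw [← decomp_mod q x L hq]
  rw [Nat.testBit_mod_two_pow]
  simp [hi]

lemma tb_high (q x L i : ℕ) (hq : q < 2 ^ L) :
    (q + x * 2 ^ L).testBit (L + i) = x.testBit i := by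
  rw [← Nat.testBit_shiftRight, Nat.shiftRight_eq_div_pow, decomp_div q x L hq]

lemma tb_top {q L : ℕ} (h1 : 2 ^ L ≤ q) (h2 : q < 2 ^ (L + 1)) : q.testBit L = true := by
  rw [Nat.testBit_eq_decide_div_mod_eq]
  have hpos : 0 < 2 ^ L := Nat.two_pow_pos L
  have e1 : 1 ≤ q / 2 ^ L := (Nat.one_le_div_iff hpos).mpr (by simpa using h1)
  have e2 : q / 2 ^ L < 2 := (Nat.div_lt_iff_lt_mul hpos).mpr (by
    rw [pow_succ] at h2; omega)
  have : q / 2 ^ L = 1 := by omega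
  simp [this]

lemma ge_of_tb {q i : ℕ} (h : q.testBit i = true) : 2 ^ i ≤ q := by
  by_contra hc
  push_neg at hc
  rw [Nat.testBit_lt_two_pow hc] at h
  exact Bool.noConfusion h

lemma tb_zero_iff (n : ℕ) : n.testBit 0 = true ↔ Odd n := by
  rw [Nat.testBit_eq_decide_div_mod_eq, Nat.odd_iff]
  simp

lemma pow_two_mul_odd_eq {r s a b : ℕ} (ha : Odd a) (hb : Odd b)
    (h : 2 ^ r * a = 2 ^ s * b) : r = s ∧ a = b := by
  have key : ∀ r s a b : ℕ, Odd a → 2 ^ r * a = 2 ^ s * b → r ≤ s → r = s := by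
    intro r s a b ha h hle
    by_contra hne
    have hlt : r < s := lt_of_le_of_ne hle hne
    have h2 : a = 2 ^ (s - r) * b := by
      have heq : 2 ^ r * a = 2 ^ r * (2 ^ (s - r) * b) := by
        rw [h, ← mul_assoc, ← pow_add]
        congr 2
        omega
      exact Nat.eq_of_mul_eq_mul_left (Nat.two_pow_pos r) heq
    have hdvd : (2 : ℕ) ∣ a := by
      rw [h2]
      exact Dvd.dvd.mul_right (dvd_pow_self 2 (by omega : s - r ≠ 0)) b
    rw [Nat.odd_iff] at ha
    omega
  have hrs : r = s := by
    rcases le_total r s with hle | hle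
    · exact key r s a b ha h hle
    · exact (key s r b a hb h.symm hle).symm
  subst hrs
  exact ⟨rfl, Nat.eq_of_mul_eq_mul_left (Nat.two_pow_pos r) h⟩

lemma struct {L q x n : ℕ} (hq : Odd q) (hfib : Fibbinary q) (hL : L = q.size)
    (hx : Odd x) (hn : n = q + x * 2 ^ L) :
    Odd n ∧ 1 ≤ L ∧ n.testBit (L - 1) = true ∧ n.testBit L = true ∧
      (∀ i, i + 1 < L → ¬(n.testBit i = true ∧ n.testBit (i + 1) = true)) ∧
      n % 2 ^ L = q ∧ n / 2 ^ L = x := by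
  have hq0 : 0 < q := hq.pos
  have hL1 : 1 ≤ L := by rw [hL]; exact Nat.size_pos.mpr hq0
  have hqlt : q < 2 ^ L := by rw [hL]; exact Nat.lt_size_self q
  have hqge : 2 ^ (L - 1) ≤ q := by
    refine Nat.lt_size.mp ?_
    omega
  refine ⟨?_, hL1, ?_, ?_, ?_, ?_, ?_⟩
  · rw [Nat.odd_iff] at hq ⊢
    have hdvd : (2 : ℕ) ∣ x * 2 ^ L :=
      Dvd.dvd.mul_left (dvd_pow_self 2 (by omega : L ≠ 0)) x
    omega
  · rw [hn, tb_low hqlt (by omega)]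
    exact tb_top hqge (by rwa [show L - 1 + 1 = L by omega])
  · have := tb_high q x L 0 hqlt
    rw [Nat.add_zero] at this
    rw [hn, this]
    exact (tb_zero_iff x).mpr hx
  · intro i hi hpair
    rw [hn, tb_low hqlt (by omega)] at hpair
    have h2 := hpair.2
    rw [tb_low hqlt (by omega)] at h2
    exact hfib i ⟨hpair.1, h2⟩
  · rw [hn]; exact decomp_mod q x L hqlt
  · rw [hn]; exact decomp_div q x L hqlt

lemma odd_two_mul_sub_one {k : ℕ} (hk : 1 ≤ k) : Odd (2 * k - 1) := ⟨k - 1, by omega⟩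

lemma not_fib_of_mem {m k : ℕ} (hk : 1 ≤ k) (h : m ∈ Phi k) : ¬ Fibbinary m := by
  obtain ⟨r, q, hq, hfib, rfl⟩ := h
  obtain ⟨hodd, hL1, hb1, hb2, hmin, hmod, hdiv⟩ :=
    struct hq hfib rfl (odd_two_mul_sub_one hk) rfl
  intro hf
  have hf' := fib_of_fib_mul_pow hf
  refine hf' (q.size - 1) ⟨hb1, ?_⟩
  rwa [show q.size - 1 + 1 = q.size by omega]

lemma phi_k_unique {m k k' : ℕ} (hk : 1 ≤ k) (hk' : 1 ≤ k')
    (h : m ∈ Phi k) (h' : m ∈ Phi k') : k = k' := by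
  obtain ⟨r, q, hq, hfib, rfl⟩ := h
  obtain ⟨r', q', hq', hfib', heq⟩ := h'
  obtain ⟨hodd, hL1, hb1, hb2, hmin, hmod, hdiv⟩ :=
    struct hq hfib rfl (odd_two_mul_sub_one hk) rfl
  obtain ⟨hodd', hL1', hb1', hb2', hmin', hmod', hdiv'⟩ :=
    struct hq' hfib' rfl (odd_two_mul_sub_one hk') rfl
  obtain ⟨hrr, hnn⟩ := pow_two_mul_odd_eq hodd hodd' heq
  have hLL : q.size = q'.size := by
    rcases lt_trichotomy q.size q'.size with h1 | h1 | h1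
    · exact absurd ⟨hnn ▸ hb1, by
        rw [← hnn, show q.size - 1 + 1 = q.size by omega]; exact hb2⟩
        (hmin' (q.size - 1) (by omega))
    · exact h1
    · exact absurd ⟨hnn ▸ hb1', by
        rw [hnn, show q'.size - 1 + 1 = q'.size by omega]; exact hb2'⟩
        (hmin (q'.size - 1) (by omega))
  have hqq : q = q' := by
    rw [← hmod, ← hmod', hnn, hLL]
  have hxx : 2 * k - 1 = 2 * k' - 1 := by
    rw [← hdiv, ← hdiv', hnn, hLL]
  omega

theorem positive_integers_partition (m : ℕ) (hm : 0 < m) :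
    (Fibbinary m ∧ ∀ k : ℕ, 1 ≤ k → m ∉ Phi k) ∨
    (¬ Fibbinary m ∧ ∃! k : ℕ, 1 ≤ k ∧ m ∈ Phi k) := by
  by_cases hf : Fibbinary m
  · exact Or.inl ⟨hf, fun k hk hmem => not_fib_of_mem hk hmem hf⟩
  · refine Or.inr ⟨hf, ?_⟩
    obtain ⟨r, n, hn, rfl⟩ := Nat.exists_eq_two_pow_mul_odd hm.ne'
    have hnf : ¬ Fibbinary n := fun h => hf (fib_mul_pow r h)
    have hex : ∃ i, n.testBit i ∧ n.testBit (i + 1) := by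
      unfold Fibbinary at hnf
      push_neg at hnf
      exact hnf
    classical
    set i0 := Nat.find hex with hi0
    have hspec := Nat.find_spec hex
    have hqlt : n % 2 ^ (i0 + 1) < 2 ^ (i0 + 1) :=
      Nat.mod_lt _ (Nat.two_pow_pos _)
    have htbq : ∀ i, i < i0 + 1 → (n % 2 ^ (i0 + 1)).testBit i = n.testBit i := by
      intro i hi
      rw [Nat.testBit_mod_two_pow]
      simp [hi]
    have hq_odd : Odd (n % 2 ^ (i0 + 1)) := by
      rw [Nat.odd_iff, Nat.mod_mod_of_dvd _ (dvd_pow_self 2 (by omega : i0 + 1 ≠ 0))]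
      exact Nat.odd_iff.mp hn
    have hqfib : Fibbinary (n % 2 ^ (i0 + 1)) := by
      rintro i ⟨h1, h2⟩
      by_cases hiL : i + 1 < i0 + 1
      · rw [htbq _ (by omega)] at h1
        rw [htbq _ hiL] at h2
        exact Nat.find_min hex (show i < i0 by omega) ⟨h1, h2⟩
      · have hfls : (n % 2 ^ (i0 + 1)).testBit (i + 1) = false :=
          Nat.testBit_lt_two_pow (lt_of_lt_of_le hqlt
            (Nat.pow_le_pow_right (by norm_num) (by omega)))
        rw [hfls] at h2
        exact Bool.noConfusion h2
    have hq_top : (n % 2 ^ (i0 + 1)).testBit i0 = true := by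
      rw [htbq i0 (by omega)]
      exact hspec.1
    have hsize : (n % 2 ^ (i0 + 1)).size = i0 + 1 := by
      have h1 : (n % 2 ^ (i0 + 1)).size ≤ i0 + 1 := Nat.size_le.mpr hqlt
      have h2 : i0 < (n % 2 ^ (i0 + 1)).size := Nat.lt_size.mpr (ge_of_tb hq_top)
      omega
    have hx_odd : (n / 2 ^ (i0 + 1)) % 2 = 1 := by
      have h2 := hspec.2
      rw [Nat.testBit_eq_decide_div_mod_eq] at h2
      simpa using h2
    obtain ⟨t, ht⟩ := Nat.odd_iff.mpr hx_odd
    have hmem1 : 2 ^ r * n ∈ Phi (t + 1) := by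
      refine ⟨r, n % 2 ^ (i0 + 1), hq_odd, hqfib, ?_⟩
      rw [hsize, show 2 * (t + 1) - 1 = n / 2 ^ (i0 + 1) by omega,
        Nat.mod_add_div']
    exact ⟨t + 1, ⟨by omega, hmem1⟩,
      fun k' hk => phi_k_unique hk.1 (by omega) hk.2 hmem1⟩
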